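/- For every (i,k,ℓ) ∈ X_diff, D(i,k,ℓ) ≥ i·c′ + b′; that is, D is globally bounded below by the affine function i ↦ i·c′ + b′. -/

import Mathlib

/-- Overall service rate `d(k,ℓ) = k·μ₁ + min(ℓ,C₂)·μ₂`. -/
noncomputable def dRate (C₂ : ℕ) (μ₁ μ₂ : ℝ) (k ℓ : ℕ) : ℝ :=
  (k : ℝ) * μ₁ + ((min ℓ C₂ : ℕ) : ℝ) * μ₂

/-- Membership of `(i,k,ℓ)` in the state space `X`. -/
def memX (C₁ : ℕ) (i k ℓ : ℕ) : Prop :=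
  (i = 0 ∧ k + ℓ < C₁) ∨ k + ℓ = C₁

/-- `v` satisfies the optimality (Bellman) equations of the clearing system.
Terms whose coefficient `k·μ₁` or `min(ℓ,C₂)·μ₂` vanishes contribute `0`,
matching the convention that such summands are omitted. -/
def IsValue (C₁ C₂ : ℕ) (μ₁ μ₂ h₀ h₁ h₂ : ℝ) (v : ℕ → ℕ → ℕ → ℝ) : Prop :=
  v 0 0 0 = 0 ∧
  (∀ k ℓ : ℕ, k + ℓ ≤ C₁ → ¬(k = 0 ∧ ℓ = 0) →
    v 0 k ℓ = ((k : ℝ) * h₁ + (ℓ : ℝ) * h₂) / dRate C₂ μ₁ μ₂ k ℓ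
      + ((k : ℝ) * μ₁ / dRate C₂ μ₁ μ₂ k ℓ) * v 0 (k - 1) ℓ
      + (((min ℓ C₂ : ℕ) : ℝ) * μ₂ / dRate C₂ μ₁ μ₂ k ℓ) * v 0 k (ℓ - 1)) ∧
  (∀ i k ℓ : ℕ, k + ℓ = C₁ →
    v (i + 1) k ℓ =
      (((i : ℝ) + 1) * h₀ + (k : ℝ) * h₁ + (ℓ : ℝ) * h₂) / dRate C₂ μ₁ μ₂ k ℓ
      + ((k : ℝ) * μ₁ / dRate C₂ μ₁ μ₂ k ℓ) *
          min (v i k ℓ) (v i (k - 1) (ℓ + 1))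
      + (((min ℓ C₂ : ℕ) : ℝ) * μ₂ / dRate C₂ μ₁ μ₂ k ℓ) *
          min (v i (k + 1) (ℓ - 1)) (v i k ℓ))

/-- The difference `D(i,k,ℓ) = v(i,k,ℓ) − v(i,k−1,ℓ+1)`. -/
noncomputable def Dv (v : ℕ → ℕ → ℕ → ℝ) (i k ℓ : ℕ) : ℝ :=
  v i k ℓ - v i (k - 1) (ℓ + 1)

/-- The partial sums `S ℓ = Σ_{j=1}^ℓ j·h₂/(min(j,C₂)·μ₂)`. -/
noncomputable def Sfun (C₂ : ℕ) (μ₂ h₂ : ℝ) : ℕ → ℝ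
  | 0 => 0
  | (ℓ + 1) => Sfun C₂ μ₂ h₂ ℓ + ((ℓ : ℝ) + 1) * h₂ / (((min (ℓ + 1) C₂ : ℕ) : ℝ) * μ₂)

set_option maxHeartbeats 1000000 in
/-- The key scalar inequality driving the induction step. -/
lemma scalar_key (C₂ K ℓ i : ℕ) (hC₂ : 1 ≤ C₂) (hC : C₂ < K + 1 + ℓ)
    (μ₁ μ₂ h₀ h₁ h₂ d d' : ℝ)
    (hμ₁ : 0 < μ₁) (hμ₂ : 0 < μ₂) (hh₀ : 0 < h₀) (hh₂ : 0 < h₂)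
    (hd : d = ((K : ℝ) + 1) * μ₁ + ((min ℓ C₂ : ℕ) : ℝ) * μ₂)
    (hd' : d' = (K : ℝ) * μ₁ + ((min (ℓ + 1) C₂ : ℕ) : ℝ) * μ₂) :
    ((i : ℝ) + 1) * (-h₀ / ((C₂ : ℝ) * μ₂))
        + ((h₁ - h₂) / μ₁ - ((K : ℝ) + 1 + (ℓ : ℝ)) * h₂ / ((C₂ : ℝ) * μ₂))
      ≤ (((i : ℝ) + 1) * h₀ + ((K : ℝ) + 1) * h₁ + (ℓ : ℝ) * h₂) / d
        - (((i : ℝ) + 1) * h₀ + (K : ℝ) * h₁ + ((ℓ : ℝ) + 1) * h₂) / d'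
        + (((min ℓ C₂ : ℕ) : ℝ) * μ₂ / d + (K : ℝ) * μ₁ / d')
          * ((i : ℝ) * (-h₀ / ((C₂ : ℝ) * μ₂))
              + ((h₁ - h₂) / μ₁ - ((K : ℝ) + 1 + (ℓ : ℝ)) * h₂ / ((C₂ : ℝ) * μ₂))) := by
  have hC₂R : (1 : ℝ) ≤ (C₂ : ℝ) := by exact_mod_cast hC₂
  have hK0 : (0 : ℝ) ≤ (K : ℝ) := Nat.cast_nonneg K
  have hl0 : (0 : ℝ) ≤ (ℓ : ℝ) := Nat.cast_nonneg ℓ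
  have hC₂pos : (0 : ℝ) < (C₂ : ℝ) := by linarith
  rcases le_or_gt C₂ ℓ with hcase | hcase
  · -- ℓ ≥ C₂ : both mins are C₂
    simp only [min_eq_right hcase, min_eq_right (hcase.trans (Nat.le_succ ℓ))] at hd hd' ⊢
    have hdpos : 0 < d := by rw [hd]; positivity
    have hd'pos : 0 < d' := by
      rw [hd']; nlinarith [mul_nonneg hK0 hμ₁.le]
    have hfact : μ₁ * ((C₂ : ℝ) * μ₂) ≤ d * d' := by
      have h1 : μ₁ ≤ d := by rw [hd]; nlinarith [mul_nonneg hK0 hμ₁.le, mul_nonneg hC₂pos.le hμ₂.le]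
      have h2 : (C₂ : ℝ) * μ₂ ≤ d' := by rw [hd']; nlinarith [mul_nonneg hK0 hμ₁.le]
      nlinarith [mul_le_mul h1 h2 (by positivity) hdpos.le]
    have hN : (0 : ℝ) ≤ h₀ * (d * d' - μ₁ * ((C₂ : ℝ) * μ₂)) := by nlinarith
    rw [← sub_nonneg]
    have hrw : (0 : ℝ) ≤ h₀ * (d * d' - μ₁ * ((C₂ : ℝ) * μ₂)) / (d * d' * ((C₂ : ℝ) * μ₂)) := by
      apply div_nonneg hN; positivity
    refine le_of_le_of_eq hrw ?_
    rw [hd, hd']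
    field_simp
    ring
  · -- ℓ < C₂ : min ℓ C₂ = ℓ, min (ℓ+1) C₂ = ℓ+1
    simp only [min_eq_left hcase.le, min_eq_left (show ℓ + 1 ≤ C₂ from hcase)] at hd hd' ⊢
    push_cast at hd hd' ⊢
    have hdpos : 0 < d := by rw [hd]; positivity
    have hd'pos : 0 < d' := by rw [hd']; positivity
    set X : ℝ := μ₂ * (C₂ : ℝ) + μ₁ * ((K : ℝ) + 1 + (ℓ : ℝ) - (C₂ : ℝ)) with hX
    have hCle : (C₂ : ℝ) ≤ (K : ℝ) + (ℓ : ℝ) := by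
      have h : C₂ ≤ K + ℓ := by omega
      exact_mod_cast h
    have hXpos : (0 : ℝ) ≤ X := by
      have : (0:ℝ) ≤ (K : ℝ) + 1 + (ℓ : ℝ) - (C₂ : ℝ) := by linarith
      positivity
    have hdd' : (C₂ : ℝ) * (μ₁ * μ₂) ≤ d * d' := by
      have h1 : ((K : ℝ) + 1) * μ₁ ≤ d := by rw [hd]; nlinarith [mul_nonneg hl0 hμ₂.le]
      have h2 : ((ℓ : ℝ) + 1) * μ₂ ≤ d' := by rw [hd']; nlinarith [mul_nonneg hK0 hμ₁.le]
      have h3 : (C₂ : ℝ) + 1 ≤ ((K : ℝ) + 1) * ((ℓ : ℝ) + 1) := by nlinarith [mul_nonneg hK0 hl0]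
      nlinarith [mul_le_mul h1 h2 (by positivity) (by positivity : (0:ℝ) ≤ d),
        mul_pos hμ₁ hμ₂]
    have hN : (0 : ℝ) ≤ μ₂ * ((i : ℝ) * h₀ * X) + μ₂ * (((K : ℝ) + 1 + (ℓ : ℝ)) * h₂ * X)
        + (μ₂ * (h₀ * (μ₂ - μ₁) * (C₂ : ℝ)) + h₀ * (d * d')) := by
      have hA : (0 : ℝ) ≤ μ₂ * ((i : ℝ) * h₀ * X) := by positivity
      have hB : (0 : ℝ) ≤ μ₂ * (((K : ℝ) + 1 + (ℓ : ℝ)) * h₂ * X) := by positivity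
      have hCt : (0 : ℝ) ≤ μ₂ * (h₀ * (μ₂ - μ₁) * (C₂ : ℝ)) + h₀ * (d * d') := by
        nlinarith [mul_le_mul_of_nonneg_left hdd' hh₀.le, mul_pos (mul_pos hμ₂ hμ₂) hC₂pos]
      linarith
    rw [← sub_nonneg]
    have hrw : (0 : ℝ) ≤ (μ₂ * ((i : ℝ) * h₀ * X) + μ₂ * (((K : ℝ) + 1 + (ℓ : ℝ)) * h₂ * X)
        + (μ₂ * (h₀ * (μ₂ - μ₁) * (C₂ : ℝ)) + h₀ * (d * d'))) / (d * d' * ((C₂ : ℝ) * μ₂)) := by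
      apply div_nonneg hN; positivity
    refine le_of_le_of_eq hrw ?_
    rw [hX, hd, hd']
    field_simp
    ring

set_option maxHeartbeats 1600000 in
theorem stmt11
    (C₁ C₂ : ℕ) (hC₂pos : 1 ≤ C₂) (hC : C₂ < C₁)
    (μ₁ μ₂ h₀ h₁ h₂ : ℝ)
    (hμ₁ : 0 < μ₁) (hμ₂ : 0 < μ₂)
    (hh₀ : 0 < h₀) (hh₁ : 0 < h₁) (hh₂ : 0 < h₂)
    (v : ℕ → ℕ → ℕ → ℝ) (hv : IsValue C₁ C₂ μ₁ μ₂ h₀ h₁ h₂ v)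
 :
    ∀ i k ℓ : ℕ, memX C₁ i k ℓ → 1 ≤ k →
      (i : ℝ) * (-h₀ / ((C₂ : ℝ) * μ₂))
          + ((h₁ - h₂) / μ₁ - (C₁ : ℝ) * h₂ / ((C₂ : ℝ) * μ₂)) ≤ Dv v i k ℓ := by
  obtain ⟨hv0, hvB, hvS⟩ := hv
  have hC₂R : (1 : ℝ) ≤ (C₂ : ℝ) := by exact_mod_cast hC₂pos
  have hC₂Rpos : (0 : ℝ) < (C₂ : ℝ) := by linarith
  -- Part 1 : closed form for v 0
  have hclosed : ∀ n k ℓ : ℕ, k + ℓ = n → n ≤ C₁ →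
      v 0 k ℓ = (k : ℝ) * h₁ / μ₁ + Sfun C₂ μ₂ h₂ ℓ := by
    intro n
    induction n with
    | zero =>
      intro k ℓ hn _
      obtain ⟨rfl, rfl⟩ : k = 0 ∧ ℓ = 0 := by omega
      simp [hv0, Sfun]
    | succ n ih =>
      intro k ℓ hn hle
      have hB := hvB k ℓ (by omega) (by omega)
      rcases k with _ | K
      · rcases ℓ with _ | L
        · omega
        · have hm : 1 ≤ min (L + 1) C₂ := le_min (by omega) hC₂pos
          have hmR : (1 : ℝ) ≤ ((min (L + 1) C₂ : ℕ) : ℝ) := by exact_mod_cast hm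
          have hd : dRate C₂ μ₁ μ₂ 0 (L + 1) = ((min (L + 1) C₂ : ℕ) : ℝ) * μ₂ := by
            simp [dRate]
          have hdpos : (0 : ℝ) < ((min (L + 1) C₂ : ℕ) : ℝ) * μ₂ := by nlinarith
          simp only [Nat.add_sub_cancel] at hB
          rw [hB, hd, ih 0 L (by omega) (by omega)]
          simp only [Nat.cast_zero, zero_mul, zero_div, zero_add, Sfun]
          push_cast
          field_simp
          ring
      · rcases ℓ with _ | L
        · have hd : dRate C₂ μ₁ μ₂ (K + 1) 0 = ((K : ℝ) + 1) * μ₁ := by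
            simp [dRate]
          have hdpos : (0 : ℝ) < ((K : ℝ) + 1) * μ₁ := by positivity
          simp only [Nat.add_sub_cancel, Nat.zero_min, Nat.cast_zero] at hB
          rw [hB, hd, ih K 0 (by omega) (by omega)]
          simp only [Sfun, Nat.cast_zero, zero_mul, zero_div, add_zero, zero_add, zero_div]
          push_cast
          field_simp
          ring
        · have hm : 1 ≤ min (L + 1) C₂ := le_min (by omega) hC₂pos
          have hmR : (1 : ℝ) ≤ ((min (L + 1) C₂ : ℕ) : ℝ) := by exact_mod_cast hm
          have hd : dRate C₂ μ₁ μ₂ (K + 1) (L + 1)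
              = ((K : ℝ) + 1) * μ₁ + ((min (L + 1) C₂ : ℕ) : ℝ) * μ₂ := by
            simp only [dRate]; push_cast; ring
          have hdpos : (0 : ℝ) < ((K : ℝ) + 1) * μ₁ + ((min (L + 1) C₂ : ℕ) : ℝ) * μ₂ := by
            nlinarith [Nat.cast_nonneg (α := ℝ) K]
          simp only [Nat.add_sub_cancel] at hB
          rw [hB, hd, ih K (L + 1) (by omega) (by omega), ih (K + 1) L (by omega) (by omega)]
          simp only [Sfun]
          push_cast
          field_simp
          ring
  -- Part 2 : the bound at i = 0
  have hbase : ∀ k ℓ : ℕ, k + ℓ ≤ C₁ → 1 ≤ k →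
      (h₁ - h₂) / μ₁ - (C₁ : ℝ) * h₂ / ((C₂ : ℝ) * μ₂) ≤ Dv v 0 k ℓ := by
    intro k ℓ hkl hk
    obtain ⟨K, rfl⟩ : ∃ K, k = K + 1 := ⟨k - 1, by omega⟩
    have h1 := hclosed (K + 1 + ℓ) (K + 1) ℓ rfl hkl
    have h2 := hclosed (K + 1 + ℓ) K (ℓ + 1) (by omega) hkl
    have hD : Dv v 0 (K + 1) ℓ = v 0 (K + 1) ℓ - v 0 K (ℓ + 1) := by
      simp [Dv]
    have hm : 1 ≤ min (ℓ + 1) C₂ := le_min (by omega) hC₂pos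
    have hmR : (1 : ℝ) ≤ ((min (ℓ + 1) C₂ : ℕ) : ℝ) := by exact_mod_cast hm
    have hmnat : (ℓ + 1) * C₂ ≤ C₁ * min (ℓ + 1) C₂ := by
      rcases le_total (ℓ + 1) C₂ with h | h
      · rw [min_eq_left h]
        calc (ℓ + 1) * C₂ ≤ (ℓ + 1) * C₁ := Nat.mul_le_mul_left _ hC.le
          _ = C₁ * (ℓ + 1) := Nat.mul_comm _ _
      · rw [min_eq_right h]
        exact Nat.mul_le_mul_right _ (by omega)
    have hmcast : ((ℓ : ℝ) + 1) * (C₂ : ℝ) ≤ (C₁ : ℝ) * ((min (ℓ + 1) C₂ : ℕ) : ℝ) := by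
      exact_mod_cast hmnat
    have hTle : ((ℓ : ℝ) + 1) * h₂ / (((min (ℓ + 1) C₂ : ℕ) : ℝ) * μ₂)
        ≤ (C₁ : ℝ) * h₂ / ((C₂ : ℝ) * μ₂) := by
      rw [div_le_div_iff₀ (by positivity) (by positivity)]
      nlinarith [mul_le_mul_of_nonneg_right hmcast (mul_pos hh₂ hμ₂).le]
    have hfrac : (0 : ℝ) < h₂ / μ₁ := by positivity
    rw [hD, h1, h2]
    simp only [Sfun]
    have hexp : (h₂ : ℝ) / μ₁ = h₂ / μ₁ := rfl
    push_cast
    push_cast at hTle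
    have hsplit : (h₁ - h₂) / μ₁ = h₁ / μ₁ - h₂ / μ₁ := by ring
    have hK1 : ((K : ℝ) + 1) * h₁ / μ₁ = (K : ℝ) * h₁ / μ₁ + h₁ / μ₁ := by ring
    linarith
  -- Part 3 : induction on i for states with k + ℓ = C₁
  have hmain : ∀ i k ℓ : ℕ, k + ℓ = C₁ → 1 ≤ k →
      (i : ℝ) * (-h₀ / ((C₂ : ℝ) * μ₂))
        + ((h₁ - h₂) / μ₁ - (C₁ : ℝ) * h₂ / ((C₂ : ℝ) * μ₂)) ≤ Dv v i k ℓ := by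
    intro i
    induction i with
    | zero =>
      intro k ℓ hkl hk
      simpa using hbase k ℓ hkl.le hk
    | succ i ih =>
      intro k ℓ hkl hk
      obtain ⟨K, rfl⟩ : ∃ K, k = K + 1 := ⟨k - 1, by omega⟩
      have hC' : C₂ < K + 1 + ℓ := by omega
      have hm' : 1 ≤ min (ℓ + 1) C₂ := le_min (by omega) hC₂pos
      have hm'R : (1 : ℝ) ≤ ((min (ℓ + 1) C₂ : ℕ) : ℝ) := by exact_mod_cast hm'
      have hd : dRate C₂ μ₁ μ₂ (K + 1) ℓ
          = ((K : ℝ) + 1) * μ₁ + ((min ℓ C₂ : ℕ) : ℝ) * μ₂ := by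
        simp only [dRate]; push_cast; ring
      have hd' : dRate C₂ μ₁ μ₂ K (ℓ + 1)
          = (K : ℝ) * μ₁ + ((min (ℓ + 1) C₂ : ℕ) : ℝ) * μ₂ := rfl
      have hdpos : 0 < dRate C₂ μ₁ μ₂ (K + 1) ℓ := by
        rw [hd]
        have : (0 : ℝ) ≤ ((min ℓ C₂ : ℕ) : ℝ) := Nat.cast_nonneg _
        nlinarith [Nat.cast_nonneg (α := ℝ) K]
      have hd'pos : 0 < dRate C₂ μ₁ μ₂ K (ℓ + 1) := by
        rw [hd']
        nlinarith [Nat.cast_nonneg (α := ℝ) K]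
      have E1 := hvS i (K + 1) ℓ hkl
      have E2 := hvS i K (ℓ + 1) (by omega)
      simp only [Nat.add_sub_cancel] at E1 E2
      push_cast at E1 E2
      -- the two coefficients that get multiplied with bounds
      have hcP : (0 : ℝ) ≤ ((ℓ : ℝ) ⊓ (C₂ : ℝ)) * μ₂ / dRate C₂ μ₁ μ₂ (K + 1) ℓ := by
        apply div_nonneg _ hdpos.le
        exact mul_nonneg (le_min (Nat.cast_nonneg _) (Nat.cast_nonneg _)) hμ₂.le
      have hcQ : (0 : ℝ) ≤ (K : ℝ) * μ₁ / dRate C₂ μ₁ μ₂ K (ℓ + 1) := by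
        apply div_nonneg _ hd'pos.le
        exact mul_nonneg (Nat.cast_nonneg _) hμ₁.le
      -- IH facts
      have hAB : (i : ℝ) * (-h₀ / ((C₂ : ℝ) * μ₂))
          + ((h₁ - h₂) / μ₁ - (C₁ : ℝ) * h₂ / ((C₂ : ℝ) * μ₂))
          ≤ v i (K + 1) ℓ - v i K (ℓ + 1) := by
        have := ih (K + 1) ℓ hkl (by omega)
        simpa only [Dv, Nat.add_sub_cancel] using this
      -- coefficient sums equal one
      have h1 : ((K : ℝ) + 1) * μ₁ / dRate C₂ μ₁ μ₂ (K + 1) ℓ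
          + ((ℓ : ℝ) ⊓ (C₂ : ℝ)) * μ₂ / dRate C₂ μ₁ μ₂ (K + 1) ℓ = 1 := by
        rw [← add_div, div_eq_one_iff_eq hdpos.ne', hd]
        push_cast
        ring
      have h2 : (K : ℝ) * μ₁ / dRate C₂ μ₁ μ₂ K (ℓ + 1)
          + (((ℓ : ℝ) + 1) ⊓ (C₂ : ℝ)) * μ₂ / dRate C₂ μ₁ μ₂ K (ℓ + 1) = 1 := by
        rw [← add_div, div_eq_one_iff_eq hd'pos.ne', hd']
        push_cast
        ring
      -- the scalar key inequality
      have key := scalar_key C₂ K ℓ i hC₂pos hC' μ₁ μ₂ h₀ h₁ h₂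
          (dRate C₂ μ₁ μ₂ (K + 1) ℓ) (dRate C₂ μ₁ μ₂ K (ℓ + 1))
          hμ₁ hμ₂ hh₀ hh₂ hd hd'
      push_cast at key
      have hC1R : (C₁ : ℝ) = (K : ℝ) + 1 + (ℓ : ℝ) := by
        rw [← hkl]; push_cast; ring
      rw [← hC1R] at key
      -- unfold the goal
      simp only [Dv, Nat.add_sub_cancel]
      push_cast
      rcases le_or_gt ((i : ℝ) * (-h₀ / ((C₂ : ℝ) * μ₂))
          + ((h₁ - h₂) / μ₁ - (C₁ : ℝ) * h₂ / ((C₂ : ℝ) * μ₂))) 0 with ht | ht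
      · -- case t ≤ 0
        have hMz1 : (((K : ℝ) + 1) * μ₁ / dRate C₂ μ₁ μ₂ (K + 1) ℓ
            + ((ℓ : ℝ) ⊓ (C₂ : ℝ)) * μ₂ / dRate C₂ μ₁ μ₂ (K + 1) ℓ)
            * (v i (K + 1) ℓ ⊓ v i K (ℓ + 1)) = v i (K + 1) ℓ ⊓ v i K (ℓ + 1) := by
          rw [h1, one_mul]
        have hMz2 : ((K : ℝ) * μ₁ / dRate C₂ μ₁ μ₂ K (ℓ + 1)
            + (((ℓ : ℝ) + 1) ⊓ (C₂ : ℝ)) * μ₂ / dRate C₂ μ₁ μ₂ K (ℓ + 1))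
            * (v i (K + 1) ℓ ⊓ v i K (ℓ + 1)) = v i (K + 1) ℓ ⊓ v i K (ℓ + 1) := by
          rw [h2, one_mul]
        have hPmul : ((ℓ : ℝ) ⊓ (C₂ : ℝ)) * μ₂ / dRate C₂ μ₁ μ₂ (K + 1) ℓ
            * ((v i (K + 1) ℓ ⊓ v i K (ℓ + 1)) + ((i : ℝ) * (-h₀ / ((C₂ : ℝ) * μ₂))
                + ((h₁ - h₂) / μ₁ - (C₁ : ℝ) * h₂ / ((C₂ : ℝ) * μ₂))))
            ≤ ((ℓ : ℝ) ⊓ (C₂ : ℝ)) * μ₂ / dRate C₂ μ₁ μ₂ (K + 1) ℓ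
            * (v i (K + 1 + 1) (ℓ - 1) ⊓ v i (K + 1) ℓ) := by
          rcases Nat.eq_zero_or_pos ℓ with h0 | hposℓ
          · subst h0; norm_num
          · obtain ⟨L, rfl⟩ : ∃ L, ℓ = L + 1 := ⟨ℓ - 1, by omega⟩
            have hps := ih (K + 1 + 1) L (by omega) (by omega)
            simp only [Dv, Nat.add_sub_cancel] at hps
            simp only [Nat.add_sub_cancel]
            refine mul_le_mul_of_nonneg_left (le_min ?_ ?_) hcP
            · linarith [min_le_left (v i (K + 1) (L + 1)) (v i K (L + 1 + 1))]
            · linarith [min_le_left (v i (K + 1) (L + 1)) (v i K (L + 1 + 1))]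
        have hQmul : (K : ℝ) * μ₁ / dRate C₂ μ₁ μ₂ K (ℓ + 1)
            * (v i K (ℓ + 1) ⊓ v i (K - 1) (ℓ + 1 + 1))
            ≤ (K : ℝ) * μ₁ / dRate C₂ μ₁ μ₂ K (ℓ + 1)
            * ((v i (K + 1) ℓ ⊓ v i K (ℓ + 1)) - ((i : ℝ) * (-h₀ / ((C₂ : ℝ) * μ₂))
                + ((h₁ - h₂) / μ₁ - (C₁ : ℝ) * h₂ / ((C₂ : ℝ) * μ₂)))) := by
          rcases Nat.eq_zero_or_pos K with h0 | hposK
          · subst h0; norm_num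
          · refine mul_le_mul_of_nonneg_left ?_ hcQ
            refine le_trans (min_le_left _ _) ?_
            have hmm := le_min
              (show v i K (ℓ + 1) + ((i : ℝ) * (-h₀ / ((C₂ : ℝ) * μ₂))
                + ((h₁ - h₂) / μ₁ - (C₁ : ℝ) * h₂ / ((C₂ : ℝ) * μ₂))) ≤ v i (K + 1) ℓ by
                  linarith)
              (show v i K (ℓ + 1) + ((i : ℝ) * (-h₀ / ((C₂ : ℝ) * μ₂))
                + ((h₁ - h₂) / μ₁ - (C₁ : ℝ) * h₂ / ((C₂ : ℝ) * μ₂))) ≤ v i K (ℓ + 1) by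
                  linarith)
            linarith
        linarith [E1, E2, hPmul, hQmul, hMz1, hMz2, key]
      · -- case t > 0
        have hMB : v i (K + 1) ℓ ⊓ v i K (ℓ + 1) = v i K (ℓ + 1) :=
          min_eq_right (by linarith)
        rw [hMB] at E1 E2
        have hBz1 : (((K : ℝ) + 1) * μ₁ / dRate C₂ μ₁ μ₂ (K + 1) ℓ
            + ((ℓ : ℝ) ⊓ (C₂ : ℝ)) * μ₂ / dRate C₂ μ₁ μ₂ (K + 1) ℓ)
            * v i K (ℓ + 1) = v i K (ℓ + 1) := by
          rw [h1, one_mul]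
        have hBz2 : ((K : ℝ) * μ₁ / dRate C₂ μ₁ μ₂ K (ℓ + 1)
            + (((ℓ : ℝ) + 1) ⊓ (C₂ : ℝ)) * μ₂ / dRate C₂ μ₁ μ₂ K (ℓ + 1))
            * v i K (ℓ + 1) = v i K (ℓ + 1) := by
          rw [h2, one_mul]
        have hABmul : ((ℓ : ℝ) ⊓ (C₂ : ℝ)) * μ₂ / dRate C₂ μ₁ μ₂ (K + 1) ℓ
            * ((i : ℝ) * (-h₀ / ((C₂ : ℝ) * μ₂))
                + ((h₁ - h₂) / μ₁ - (C₁ : ℝ) * h₂ / ((C₂ : ℝ) * μ₂)))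
            ≤ ((ℓ : ℝ) ⊓ (C₂ : ℝ)) * μ₂ / dRate C₂ μ₁ μ₂ (K + 1) ℓ
            * (v i (K + 1) ℓ - v i K (ℓ + 1)) :=
          mul_le_mul_of_nonneg_left hAB hcP
        have hPmul : ((ℓ : ℝ) ⊓ (C₂ : ℝ)) * μ₂ / dRate C₂ μ₁ μ₂ (K + 1) ℓ
            * v i (K + 1) ℓ
            ≤ ((ℓ : ℝ) ⊓ (C₂ : ℝ)) * μ₂ / dRate C₂ μ₁ μ₂ (K + 1) ℓ
            * (v i (K + 1 + 1) (ℓ - 1) ⊓ v i (K + 1) ℓ) := by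
          rcases Nat.eq_zero_or_pos ℓ with h0 | hposℓ
          · subst h0; norm_num
          · obtain ⟨L, rfl⟩ : ∃ L, ℓ = L + 1 := ⟨ℓ - 1, by omega⟩
            have hps := ih (K + 1 + 1) L (by omega) (by omega)
            simp only [Dv, Nat.add_sub_cancel] at hps
            simp only [Nat.add_sub_cancel]
            refine mul_le_mul_of_nonneg_left (le_min (by linarith) le_rfl) hcP
        have hQmul : (K : ℝ) * μ₁ / dRate C₂ μ₁ μ₂ K (ℓ + 1)
            * (v i K (ℓ + 1) ⊓ v i (K - 1) (ℓ + 1 + 1))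
            ≤ (K : ℝ) * μ₁ / dRate C₂ μ₁ μ₂ K (ℓ + 1)
            * (v i K (ℓ + 1) - ((i : ℝ) * (-h₀ / ((C₂ : ℝ) * μ₂))
                + ((h₁ - h₂) / μ₁ - (C₁ : ℝ) * h₂ / ((C₂ : ℝ) * μ₂)))) := by
          rcases Nat.eq_zero_or_pos K with h0 | hposK
          · subst h0; norm_num
          · have hqs := ih K (ℓ + 1) (by omega) hposK
            simp only [Dv, Nat.add_sub_cancel] at hqs
            refine mul_le_mul_of_nonneg_left (le_trans (min_le_right _ _) (by linarith)) hcQ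
        linarith [E1, E2, hPmul, hQmul, hABmul, hBz1, hBz2, key]
  intro i k ℓ hmem hk
  rcases hmem with ⟨rfl, hlt⟩ | heq
  · simpa using hbase k ℓ hlt.le hk
  · exact hmain i k ℓ heq hk
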